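/- Let P and Q be probability measures on a measurable space Ω and let A ⊆ Ω be a measurable set. Then P(A) + Q(Aᶜ) ≥ (1/2)·exp(−KL(P‖Q)), where KL(P‖Q) denotes the Kullback–Leibler divergence of P with respect to Q (equal to +∞ when P is not absolutely continuous with respect to Q). Equivalently, KL(P‖Q) ≥ log( 1 / (2(P(A) + Q(Aᶜ))) ). -/

import Mathlib

open MeasureTheory ENNReal

open Classical in
/-- The Kullback–Leibler divergence `KL(P‖Q)`, valued in `ℝ≥0∞`: equal to
`∫ log(dP/dQ) dP` when `P ≪ Q` and the log-likelihood ratio is integrable,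
and `+∞` otherwise. -/
noncomputable def klDiv' {Ω : Type*} [MeasurableSpace Ω] (P Q : Measure Ω) : ℝ≥0∞ :=
  if P ≪ Q ∧ Integrable (llr P Q) P then ENNReal.ofReal (∫ ω, llr P Q ω ∂P) else ⊤

/-- `exp(−x)` for `x : ℝ≥0∞`, with the convention `exp(−∞) = 0`. -/
noncomputable def expNeg (x : ℝ≥0∞) : ℝ :=
  if x = ⊤ then 0 else Real.exp (-x.toReal)

/-- The Bretagnolle–Huber ("high-probability Pinsker") inequality: for probability
measures `P, Q` and any measurable event `A`,
`P(A) + Q(Aᶜ) ≥ (1/2)·exp(−KL(P‖Q))`, where `KL(P‖Q) = +∞` (so the right-hand side is `0`)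
when `P` is not absolutely continuous with respect to `Q`. -/
theorem bretagnolle_huber {Ω : Type*} [MeasurableSpace Ω]
    (P Q : Measure Ω) [IsProbabilityMeasure P] [IsProbabilityMeasure Q]
    {A : Set Ω} (hA : MeasurableSet A) :
    ENNReal.ofReal (2⁻¹ * expNeg (klDiv' P Q)) ≤ P A + Q Aᶜ := by
  by_cases hcase : P ≪ Q ∧ Integrable (llr P Q) P
  swap
  · simp [klDiv', expNeg, hcase]
  obtain ⟨hac, hint⟩ := hcase
  set f : Ω → ℝ≥0∞ := P.rnDeriv Q with hf_def
  have hf : Measurable f := Measure.measurable_rnDeriv P Q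
  set KL : ℝ := ∫ ω, llr P Q ω ∂P with hKL_def
  -- the "min" integral
  set m : ℝ≥0∞ := ∫⁻ x, min (f x) 1 ∂Q with hm_def
  -- Step A : m ≤ P A + Q Aᶜ
  have hmin_meas : Measurable fun x => min (f x) 1 := hf.min measurable_const
  have hstepA : m ≤ P A + Q Aᶜ := by
    rw [hm_def, ← lintegral_add_compl (fun x => min (f x) 1) hA]
    gcongr
    · calc ∫⁻ x in A, min (f x) 1 ∂Q ≤ ∫⁻ x in A, f x ∂Q :=
            lintegral_mono fun x => min_le_left _ _
        _ = P A := Measure.setLIntegral_rnDeriv hac A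
    · calc ∫⁻ x in Aᶜ, min (f x) 1 ∂Q ≤ ∫⁻ x in Aᶜ, (1 : ℝ≥0∞) ∂Q :=
            lintegral_mono fun x => min_le_right _ _
        _ = Q Aᶜ := setLIntegral_one _
  -- the Hellinger-type integral
  set S : ℝ≥0∞ := ∫⁻ x, f x ^ (1/2 : ℝ) ∂Q with hS_def
  have hmass : ∫⁻ x, f x ∂Q = 1 := by
    rw [Measure.lintegral_rnDeriv hac, measure_univ]
  have hm_le_one : m ≤ 1 := by
    calc m ≤ ∫⁻ _, (1 : ℝ≥0∞) ∂Q := lintegral_mono fun x => min_le_right _ _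
      _ = 1 := by simp
  -- S is finite (S ≤ 2)
  have hS_le_two : S ≤ 2 := by
    calc S ≤ ∫⁻ x, (1 + f x) ∂Q := by
          refine lintegral_mono fun x => ?_
          rcases le_total (f x) 1 with h | h
          · calc f x ^ (1/2 : ℝ) ≤ (1 : ℝ≥0∞) ^ (1/2 : ℝ) :=
                  ENNReal.rpow_le_rpow h (by norm_num)
              _ = 1 := ENNReal.one_rpow _
              _ ≤ 1 + f x := le_self_add
          · calc f x ^ (1/2 : ℝ) ≤ f x ^ (1 : ℝ) :=
                  ENNReal.rpow_le_rpow_of_exponent_le h (by norm_num)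
              _ = f x := ENNReal.rpow_one _
              _ ≤ 1 + f x := le_add_self
      _ = 2 := by rw [lintegral_add_left measurable_const, hmass]; simp [one_add_one_eq_two]
  have hS_ne_top : S ≠ ⊤ := (hS_le_two.trans_lt (by norm_num)).ne
  -- Step B (Cauchy–Schwarz): S ≤ m^(1/2) * 2^(1/2)
  have hstepB : S ≤ m ^ (1/2 : ℝ) * 2 ^ (1/2 : ℝ) := by
    have hmax_meas : Measurable fun x => max (f x) 1 := hf.max measurable_const
    have hpq : Real.HolderConjugate 2 2 := ⟨by norm_num, by norm_num, by norm_num⟩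
    have hdecomp : ∀ x, f x ^ (1/2 : ℝ)
        = ((fun x => min (f x) 1 ^ (1/2 : ℝ)) * fun x => max (f x) 1 ^ (1/2 : ℝ)) x := by
      intro x
      simp only [Pi.mul_apply]
      rw [← ENNReal.mul_rpow_of_nonneg _ _ (by norm_num), min_mul_max, mul_one]
    have hCS := ENNReal.lintegral_mul_le_Lp_mul_Lq Q hpq
      (f := fun x => min (f x) 1 ^ (1/2 : ℝ)) (g := fun x => max (f x) 1 ^ (1/2 : ℝ))
      ((hmin_meas.pow_const ((1:ℝ)/2)).aemeasurable)
      ((hmax_meas.pow_const ((1:ℝ)/2)).aemeasurable)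
    have hexp : ∀ g : Ω → ℝ≥0∞, ∀ x, (g x ^ (1/2 : ℝ)) ^ (2 : ℝ) = g x := by
      intro g x
      rw [← ENNReal.rpow_mul]
      norm_num
    have hmax_int : ∫⁻ x, max (f x) 1 ∂Q ≤ 2 := by
      calc ∫⁻ x, max (f x) 1 ∂Q ≤ ∫⁻ x, (1 + f x) ∂Q := by
            refine lintegral_mono fun x => ?_
            exact max_le (le_add_self) (le_self_add)
        _ = 2 := by rw [lintegral_add_left measurable_const, hmass]; simp [one_add_one_eq_two]
    calc S = ∫⁻ x, ((fun x => min (f x) 1 ^ (1/2 : ℝ)) * fun x => max (f x) 1 ^ (1/2 : ℝ)) x ∂Q := by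
          rw [hS_def]; exact lintegral_congr hdecomp
      _ ≤ (∫⁻ x, (min (f x) 1 ^ (1/2 : ℝ)) ^ (2 : ℝ) ∂Q) ^ (1/(2:ℝ))
          * (∫⁻ x, (max (f x) 1 ^ (1/2 : ℝ)) ^ (2 : ℝ) ∂Q) ^ (1/(2:ℝ)) := hCS
      _ = (∫⁻ x, min (f x) 1 ∂Q) ^ (1/(2:ℝ)) * (∫⁻ x, max (f x) 1 ∂Q) ^ (1/(2:ℝ)) := by
          simp_rw [← ENNReal.rpow_mul]
          norm_num
      _ ≤ m ^ (1/2 : ℝ) * 2 ^ (1/2 : ℝ) :=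
          mul_le_mul' (ENNReal.rpow_le_rpow (le_of_eq hm_def.symm) (by norm_num))
            (ENNReal.rpow_le_rpow hmax_int (by norm_num))
  -- auxiliary function h = (f⁻¹)^(1/2)
  set h : Ω → ℝ≥0∞ := fun x => (f x)⁻¹ ^ (1/2 : ℝ) with hh_def
  have hh_meas : Measurable h := hf.inv.pow_const _
  -- ∫⁻ h ∂P = S
  have hint_h : ∫⁻ x, h x ∂P = S := by
    rw [← MeasureTheory.lintegral_rnDeriv_mul hac hh_meas.aemeasurable, hS_def]
    refine lintegral_congr_ae ?_
    filter_upwards [Measure.rnDeriv_ne_top P Q] with x hx_top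
    show f x * (f x)⁻¹ ^ (1/2 : ℝ) = f x ^ (1/2 : ℝ)
    rcases eq_or_ne (f x) 0 with hx0 | hx0
    · rw [hx0]
      simp [ENNReal.zero_rpow_of_pos (by norm_num : (0:ℝ) < 1/2)]
    · calc f x * (f x)⁻¹ ^ (1/2 : ℝ)
          = f x ^ (1:ℝ) * f x ^ (-(1/2) : ℝ) := by
            rw [ENNReal.rpow_one, ENNReal.inv_rpow, ← ENNReal.rpow_neg]
        _ = f x ^ ((1:ℝ) + -(1/2)) := (ENNReal.rpow_add _ _ hx0 hx_top).symm
        _ = f x ^ (1/2 : ℝ) := by norm_num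
  -- exp(-llr/2) =ᵐ[P] toReal ∘ h
  have h_ae : (fun ω => Real.exp (-llr P Q ω / 2)) =ᵐ[P] fun ω => (h ω).toReal := by
    filter_upwards [Measure.rnDeriv_pos hac, hac.ae_le (Measure.rnDeriv_ne_top P Q)]
      with ω hpos htop
    have hx_pos : 0 < (f ω).toReal := ENNReal.toReal_pos hpos.ne' htop
    rw [llr]
    have : -Real.log (f ω).toReal / 2 = Real.log (f ω).toReal * (-(1/2)) := by ring
    rw [this, ← Real.rpow_def_of_pos hx_pos, Real.rpow_neg hx_pos.le,
      ← Real.inv_rpow hx_pos.le]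
    rw [hh_def]
    simp only
    rw [← ENNReal.toReal_rpow, ENNReal.toReal_inv]
  -- integrability of toReal ∘ h
  have hh_int : Integrable (fun ω => (h ω).toReal) P := by
    refine integrable_toReal_of_lintegral_ne_top hh_meas.aemeasurable ?_
    rw [hint_h]; exact hS_ne_top
  -- Step C (Jensen): exp(-KL/2) ≤ S.toReal
  have hstepC : Real.exp (-KL / 2) ≤ S.toReal := by
    have hjensen := convexOn_exp.map_integral_le (f := fun ω => -llr P Q ω / 2) (μ := P)
      Real.continuous_exp.continuousOn isClosed_univ
      (Filter.Eventually.of_forall fun x => Set.mem_univ _)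
      ((hint.neg).div_const 2)
      (hh_int.congr h_ae.symm)
    have h1 : ∫ ω, (-llr P Q ω / 2) ∂P = -KL / 2 := by
      rw [integral_div, integral_neg, hKL_def]
    have h2 : ∫ ω, Real.exp (-llr P Q ω / 2) ∂P = S.toReal := by
      rw [integral_congr_ae h_ae, integral_toReal hh_meas.aemeasurable, hint_h]
      filter_upwards [Measure.rnDeriv_pos hac] with ω hpos
      rw [hh_def]
      simp only
      exact ENNReal.rpow_lt_top_of_nonneg (by norm_num) (by simpa using hpos.ne')
    calc Real.exp (-KL / 2) = Real.exp (∫ ω, (-llr P Q ω / 2) ∂P) := by rw [h1]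
      _ ≤ ∫ ω, Real.exp (-llr P Q ω / 2) ∂P := hjensen
      _ = S.toReal := h2
  -- combine: ofReal (exp (-KL)) ≤ 2 * m
  have hcomb : ENNReal.ofReal (Real.exp (-KL)) ≤ 2 * m := by
    have he : ENNReal.ofReal (Real.exp (-KL / 2)) ≤ S :=
      ENNReal.ofReal_le_of_le_toReal hstepC
    have hsq : ENNReal.ofReal (Real.exp (-KL))
        = ENNReal.ofReal (Real.exp (-KL / 2)) * ENNReal.ofReal (Real.exp (-KL / 2)) := by
      rw [← ENNReal.ofReal_mul (Real.exp_pos _).le, ← Real.exp_add]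
      ring_nf
    calc ENNReal.ofReal (Real.exp (-KL))
        = ENNReal.ofReal (Real.exp (-KL / 2)) * ENNReal.ofReal (Real.exp (-KL / 2)) := hsq
      _ ≤ S * S := mul_le_mul' he he
      _ ≤ (m ^ (1/2 : ℝ) * 2 ^ (1/2 : ℝ)) * (m ^ (1/2 : ℝ) * 2 ^ (1/2 : ℝ)) :=
          mul_le_mul' hstepB hstepB
      _ = (m ^ (1/2 : ℝ) * m ^ (1/2 : ℝ)) * ((2:ℝ≥0∞) ^ (1/2 : ℝ) * 2 ^ (1/2 : ℝ)) := by ring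
      _ = m * 2 := by
          rw [← ENNReal.rpow_add_of_nonneg _ _ (by norm_num) (by norm_num),
            ← ENNReal.rpow_add_of_nonneg _ _ (by norm_num) (by norm_num)]
          norm_num
      _ = 2 * m := mul_comm _ _
  -- unfold klDiv' and expNeg and conclude
  have hKL_eq : klDiv' P Q = ENNReal.ofReal KL := by
    rw [klDiv', if_pos ⟨hac, hint⟩]
  have hexpNeg_le : expNeg (klDiv' P Q) ≤ Real.exp (-KL) := by
    rw [hKL_eq, expNeg, if_neg ENNReal.ofReal_ne_top]
    refine Real.exp_le_exp.mpr ?_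
    simp only [neg_le_neg_iff]
    rcases le_or_gt 0 KL with h0 | h0
    · rw [ENNReal.toReal_ofReal h0]
    · rw [ENNReal.ofReal_of_nonpos h0.le]
      simpa using h0.le
  calc ENNReal.ofReal (2⁻¹ * expNeg (klDiv' P Q))
      ≤ ENNReal.ofReal (2⁻¹ * Real.exp (-KL)) := by
        refine ENNReal.ofReal_le_ofReal ?_
        have h0 : (0:ℝ) < 2⁻¹ := by norm_num
        exact mul_le_mul_of_nonneg_left hexpNeg_le h0.le
    _ = ENNReal.ofReal 2⁻¹ * ENNReal.ofReal (Real.exp (-KL)) :=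
        ENNReal.ofReal_mul (by norm_num)
    _ ≤ ENNReal.ofReal 2⁻¹ * (2 * m) := by gcongr
    _ = m := by
        rw [show (ENNReal.ofReal 2⁻¹ : ℝ≥0∞) = 2⁻¹ by
          rw [ENNReal.ofReal_inv_of_pos (by norm_num)]; norm_num]
        rw [← mul_assoc, ENNReal.inv_mul_cancel (by norm_num) (by norm_num), one_mul]
    _ ≤ P A + Q Aᶜ := hstepA
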